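/- Let (Ω, ℱ, μ) be a probability space and let g* : Ω → ℝ be a measurable function with 0 ≤ g* ≤ 1. Fix γ ∈ ℝ and let A_γ = {ω : g*(ω) ≥ γ} be the superlevel set of g* at level γ. Then for every measurable set B ⊆ Ω with μ(B) = μ(A_γ), one has ∫_B g* dμ ≤ ∫_{A_γ} g* dμ. Consequently, among all selection rules accepting the same fraction of samples, accepting exactly the samples whose conditional correctness probability g* exceeds the threshold maximizes the expected number of correct accepted predictions, i.e., minimizes the selective risk at that coverage level. -/

import Mathlib

open MeasureTheory Real

/-- Thresholding the Bayes-optimal confidence is optimal at each coverage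
level (parts 2–3 of Theorem 3.3): for `g*` with values in `[0,1]` and the
superlevel set `A_γ = {ω | γ ≤ g* ω}`, every measurable set `B` with the same
measure (coverage) as `A_γ` satisfies `∫_B g* ≤ ∫_{A_γ} g*`, i.e. the
threshold selector maximizes the mass of correct accepted predictions. -/
theorem threshold_selector_optimal
    {Ω : Type*} [MeasurableSpace Ω] (μ : Measure Ω) [IsProbabilityMeasure μ]
    (gstar : Ω → ℝ) (hg : Measurable gstar)
    (hg0 : ∀ ω, 0 ≤ gstar ω) (hg1 : ∀ ω, gstar ω ≤ 1)
    (γ : ℝ) (B : Set Ω) (hB : MeasurableSet B)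
    (hcov : μ B = μ {ω | γ ≤ gstar ω}) :
    ∫ ω in B, gstar ω ∂μ ≤ ∫ ω in {ω | γ ≤ gstar ω}, gstar ω ∂μ := by
  set A : Set Ω := {ω | γ ≤ gstar ω} with hA_def
  have hA : MeasurableSet A := measurableSet_le measurable_const hg
  have hInt : Integrable gstar μ := by
    apply (integrable_const (1 : ℝ)).mono' hg.aestronglyMeasurable
    filter_upwards with ω
    rw [Real.norm_eq_abs, abs_of_nonneg (hg0 ω)]
    exact hg1 ω
  have hIB : IntegrableOn gstar B μ := hInt.integrableOn
  have hIA : IntegrableOn gstar A μ := hInt.integrableOn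
  -- measures of the two differences agree
  have hmeas : μ (B \ A) = μ (A \ B) := by
    have h1 : μ (B \ A) + μ (B ∩ A) = μ B := measure_diff_add_inter B hA
    have h2 : μ (A \ B) + μ (A ∩ B) = μ A := measure_diff_add_inter A hB
    rw [Set.inter_comm] at h2
    have hfin : μ (B ∩ A) ≠ ⊤ := (measure_lt_top μ _).ne
    have : μ (B \ A) + μ (B ∩ A) = μ (A \ B) + μ (B ∩ A) := by
      rw [h1, h2, hcov]
    exact (ENNReal.cancel_of_ne hfin).inj_left.mp this
  have hsplitB : ∫ ω in B ∩ A, gstar ω ∂μ + ∫ ω in B \ A, gstar ω ∂μ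
      = ∫ ω in B, gstar ω ∂μ := integral_inter_add_diff hA hIB
  have hsplitA : ∫ ω in A ∩ B, gstar ω ∂μ + ∫ ω in A \ B, gstar ω ∂μ
      = ∫ ω in A, gstar ω ∂μ := integral_inter_add_diff hB hIA
  rw [← hsplitB, ← hsplitA, Set.inter_comm A B]
  gcongr _ + ?_
  -- ∫_{B\A} g ≤ γ μ(B\A) = γ μ(A\B) ≤ ∫_{A\B} g
  have hupper : ∫ ω in B \ A, gstar ω ∂μ ≤ γ * (μ (B \ A)).toReal := by
    have := setIntegral_mono_on (hIB.mono_set Set.diff_subset)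
      (integrableOn_const (measure_lt_top μ _).ne)
      (hB.diff hA) (fun ω hω => le_of_not_ge (fun h => hω.2 h))
    simpa [mul_comm, Measure.real] using this
  have hlower : γ * (μ (A \ B)).toReal ≤ ∫ ω in A \ B, gstar ω ∂μ :=
    setIntegral_ge_of_const_le_real (hA.diff hB) (measure_lt_top μ _).ne
      (fun ω hω => hω.1) (hIA.mono_set Set.diff_subset)
  calc ∫ ω in B \ A, gstar ω ∂μ ≤ γ * (μ (B \ A)).toReal := hupper
    _ = γ * (μ (A \ B)).toReal := by rw [hmeas]
    _ ≤ ∫ ω in A \ B, gstar ω ∂μ := hlower
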